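/- Equip the space C(ℝ, ℝ) of continuous real-valued functions on ℝ with the increasing sequence of seminorms ‖f‖ᵢ = sup_{t∈[−i,i]} |f(t)| for i ∈ ℕ, i ≥ 1. This graded Fréchet space is not of almost universal disposition for finite-dimensional graded Fréchet spaces: there exist ε > 0, finite-dimensional graded Fréchet spaces X ⊆ Y and an isometric embedding f₀ : X → C(ℝ,ℝ) admitting no ε-isometric embedding f : Y → C(ℝ,ℝ) with f ↾ X = f₀. -/

import Mathlib

open Set

/-- Restriction to the compact interval `[-(i+1), i+1]`, as a linear map on `C(ℝ, ℝ)`. -/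
noncomputable def restrictIccL (i : ℕ) :
    C(ℝ, ℝ) →ₗ[ℝ] C(Icc (-(i : ℝ) - 1) ((i : ℝ) + 1), ℝ) where
  toFun f := f.restrict (Icc (-(i : ℝ) - 1) ((i : ℝ) + 1))
  map_add' f g := rfl
  map_smul' c f := rfl

/-- The seminorm `‖f‖ᵢ = sup_{t ∈ [-(i+1), i+1]} |f t|` on `C(ℝ, ℝ)` (the sequence of seminorms
`‖f‖ᵢ = sup_{t ∈ [-i, i]} |f t|`, `i ≥ 1`, reindexed over `ℕ`). -/
noncomputable def supIccSeminorm (i : ℕ) : Seminorm ℝ C(ℝ, ℝ) :=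
  (normSeminorm ℝ C(Icc (-(i : ℝ) - 1) ((i : ℝ) + 1), ℝ)).comp (restrictIccL i)

/-- A bundled finite-dimensional graded Fréchet space. -/
structure FinGradedFrechet where
  carrier : Type
  [acg : AddCommGroup carrier]
  [mod : Module ℝ carrier]
  [fd : FiniteDimensional ℝ carrier]
  seminorms : ℕ → Seminorm ℝ carrier
  mono : Monotone seminorms
  separating : ∀ x : carrier, (∀ i : ℕ, seminorms i x = 0) → x = 0

attribute [instance] FinGradedFrechet.acg FinGradedFrechet.mod FinGradedFrechet.fd

/- ### Auxiliary material for the proof -/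

/-- The clamp function `t ↦ max (-1) (min 1 t)`, a continuous function with values in `[-1,1]`
equal to `1` on `[1, ∞)` and `-1` on `(-∞, -1]`. -/
noncomputable def gclamp : C(ℝ, ℝ) :=
  ⟨fun t => max (-1) (min 1 t),
    (continuous_const.max (continuous_const.min continuous_id))⟩

lemma gclamp_abs_le (t : ℝ) : |gclamp t| ≤ 1 := by
  rw [abs_le]
  constructor
  · exact le_max_left _ _
  · exact max_le (by norm_num) (min_le_left _ _)

lemma gclamp_of_one_le {s : ℝ} (h : 1 ≤ s) : gclamp s = 1 := by
  show max (-1) (min 1 s) = 1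
  rw [min_eq_left h]
  exact max_eq_right (by norm_num)

lemma gclamp_of_le_neg_one {s : ℝ} (h : s ≤ -1) : gclamp s = -1 := by
  show max (-1) (min 1 s) = -1
  rw [min_eq_right (by linarith)]
  exact max_eq_left (by linarith)

lemma abs_gclamp_of_one_le_abs {s : ℝ} (h : 1 ≤ |s|) : |gclamp s| = 1 := by
  rcases le_or_gt 1 s with hs | hs
  · rw [gclamp_of_one_le hs]; norm_num
  · have : s ≤ -1 := by
      rcases abs_cases s with ⟨h1, _⟩ | ⟨h1, _⟩ <;> linarith
    rw [gclamp_of_le_neg_one this]; norm_num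

lemma le_supIcc (i : ℕ) (f : C(ℝ, ℝ)) {x : ℝ}
    (hx : x ∈ Icc (-(i : ℝ) - 1) ((i : ℝ) + 1)) : |f x| ≤ supIccSeminorm i f := by
  have := (f.restrict (Icc (-(i : ℝ) - 1) ((i : ℝ) + 1))).norm_coe_le_norm ⟨x, hx⟩
  exact this

lemma supIcc_le (i : ℕ) (f : C(ℝ, ℝ)) {C : ℝ} (hC : 0 ≤ C)
    (hf : ∀ x ∈ Icc (-(i : ℝ) - 1) ((i : ℝ) + 1), |f x| ≤ C) :
    supIccSeminorm i f ≤ C := by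
  show ‖f.restrict (Icc (-(i : ℝ) - 1) ((i : ℝ) + 1))‖ ≤ C
  rw [ContinuousMap.norm_le _ hC]
  rintro ⟨x, hx⟩
  simpa [Real.norm_eq_abs] using hf x hx

/-- The example space `Y = ℝ²` with seminorms `p₀(a,b) = |a|`, `pᵢ(a,b) = max |a| |b|` for
`i ≥ 1`. -/
noncomputable def Yex : FinGradedFrechet where
  carrier := ℝ × ℝ
  seminorms := fun i =>
    if i = 0 then (normSeminorm ℝ ℝ).comp (LinearMap.fst ℝ ℝ ℝ) else normSeminorm ℝ (ℝ × ℝ)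
  mono := by
    apply monotone_nat_of_le_succ
    intro n
    rcases Nat.eq_zero_or_pos n with hn | hn
    · subst hn
      simp only [if_pos rfl, Nat.zero_add, if_neg (Nat.one_ne_zero)]
      rw [Seminorm.le_def]
      intro x
      simp only [Seminorm.comp_apply, coe_normSeminorm, LinearMap.fst_apply]
      rw [Prod.norm_def]
      exact le_max_left _ _
    · rw [if_neg (Nat.pos_iff_ne_zero.mp hn), if_neg (by omega)]
  separating := by
    intro x hx
    have := hx 1
    simp only [if_neg Nat.one_ne_zero, coe_normSeminorm] at this
    exact norm_eq_zero.mp this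

lemma Yex_seminorm_zero (y : ℝ × ℝ) : Yex.seminorms 0 y = |y.1| := by
  simp [Yex, Seminorm.comp_apply, coe_normSeminorm, Real.norm_eq_abs]
  rfl

lemma Yex_seminorm_one (y : ℝ × ℝ) : Yex.seminorms 1 y = max |y.1| |y.2| := by
  simp [Yex, coe_normSeminorm, Prod.norm_def, Real.norm_eq_abs]
  rfl

/-- The graded Fréchet space `C(ℝ, ℝ)`, with the increasing sequence of sup-seminorms over the
intervals `[-i, i]`, is not of almost universal disposition for finite-dimensional graded
Fréchet spaces: there are `ε > 0`, finite-dimensional graded Fréchet spaces `X ⊆ Y` and an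
isometric embedding `f₀ : X → C(ℝ, ℝ)` admitting no `ε`-isometric extension `f : Y → C(ℝ, ℝ)`. -/
theorem continuousMap_not_almost_universal_disposition :
    ∃ ε : ℝ, 0 < ε ∧
      ∃ (Y : FinGradedFrechet) (X : Submodule ℝ Y.carrier) (f₀ : X →ₗ[ℝ] C(ℝ, ℝ)),
        (∀ (i : ℕ) (x : X), supIccSeminorm i (f₀ x) = Y.seminorms i (x : Y.carrier)) ∧
        ¬ ∃ f : Y.carrier →ₗ[ℝ] C(ℝ, ℝ),
            (∀ x : X, f (x : Y.carrier) = f₀ x) ∧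
            ∀ (i : ℕ) (y : Y.carrier),
              (1 + ε)⁻¹ * Y.seminorms i y ≤ supIccSeminorm i (f y) ∧
              supIccSeminorm i (f y) ≤ (1 + ε) * Y.seminorms i y := by
  refine ⟨1/5, by norm_num, Yex,
    Submodule.prod (⊤ : Submodule ℝ ℝ) (⊥ : Submodule ℝ ℝ),
    (LinearMap.smulRight
      ((LinearMap.fst ℝ ℝ ℝ).comp (Submodule.prod (⊤ : Submodule ℝ ℝ) (⊥ : Submodule ℝ ℝ)).subtype)
      gclamp :), ?_, ?_⟩
  · -- isometry of f₀
    rintro i ⟨⟨a, b⟩, hx⟩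
    have hb : b = 0 := by
      have := hx.2
      simpa using this
    subst hb
    simp only [LinearMap.smulRight_apply, LinearMap.comp_apply, Submodule.subtype_apply,
      LinearMap.fst_apply]
    have hval : supIccSeminorm i (a • gclamp) = |a| := by
      apply le_antisymm
      · apply supIcc_le i _ (abs_nonneg a)
        intro x _
        have : (a • gclamp) x = a * gclamp x := rfl
        rw [this, abs_mul]
        calc |a| * |gclamp x| ≤ |a| * 1 := by
              exact mul_le_mul_of_nonneg_left (gclamp_abs_le x) (abs_nonneg a)
          _ = |a| := mul_one _
      · have h1 : (1 : ℝ) ∈ Icc (-(i : ℝ) - 1) ((i : ℝ) + 1) := by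
          constructor
          · have : (0:ℝ) ≤ (i:ℝ) := Nat.cast_nonneg i
            linarith
          · have : (0:ℝ) ≤ (i:ℝ) := Nat.cast_nonneg i
            linarith
        have := le_supIcc i (a • gclamp) h1
        have hv : (a • gclamp) (1 : ℝ) = a := by
          show a * gclamp 1 = a
          rw [gclamp_of_one_le le_rfl, mul_one]
        rwa [hv] at this
    refine Eq.trans (show _ = |a| from hval) ?_
    rcases Nat.eq_zero_or_pos i with hi | hi
    · subst hi
      rw [Yex_seminorm_zero]
    · show |a| = Yex.seminorms i (a, 0)
      have : Yex.seminorms i (a, 0) = max |a| |(0:ℝ)| := by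
        simp [Yex, if_neg (Nat.pos_iff_ne_zero.mp hi), coe_normSeminorm, Prod.norm_def, Real.norm_eq_abs]
        exact (Prod.norm_def (a, (0:ℝ))).trans (by simp)
      rw [this]
      simp
  · -- no ε-isometric extension
    rintro ⟨f, hext, hbd⟩
    set h : C(ℝ, ℝ) := f (0, 1) with hh
    -- f agrees with gclamp on (1,0)
    have hmem : ((1:ℝ), (0:ℝ)) ∈ Submodule.prod (⊤ : Submodule ℝ ℝ) (⊥ : Submodule ℝ ℝ) := by
      constructor <;> simp
    have hg : f (1, 0) = gclamp := by
      have := hext ⟨((1:ℝ), (0:ℝ)), hmem⟩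
      simp only [LinearMap.smulRight_apply, LinearMap.comp_apply, Submodule.subtype_apply] at this
      rw [this]
      show (((1:ℝ),(0:ℝ)).1 : ℝ) • gclamp = gclamp
      simp
    have hlin : ∀ t : ℝ, f (1, t) = gclamp + t • h := by
      intro t
      have hdecomp : ((1:ℝ), t) = ((1:ℝ), (0:ℝ)) + t • ((0:ℝ), (1:ℝ)) := by
        simp [Prod.ext_iff]
      rw [hdecomp]
      refine ((f.map_add _ _).trans (congrArg _ (f.map_smul _ _))).trans ?_
      rw [hg, hh]
    -- Step 1: h vanishes on [-1, 1]
    have h0 : ∀ t ∈ Icc (-(1:ℝ)) 1, h t = 0 := by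
      intro t ht
      have hb2 := (hbd 0 (0, 1)).2
      rw [Yex_seminorm_zero] at hb2
      simp only [abs_zero, mul_zero] at hb2
      have ht' : t ∈ Icc (-(0:ℕ) - 1 : ℝ) ((0:ℕ) + 1 : ℝ) := by
        simp only [Nat.cast_zero]
        constructor <;> [linarith [ht.1]; linarith [ht.2]]
      have := le_supIcc 0 h ht'
      have : |h t| ≤ 0 := le_trans this hb2
      exact abs_eq_zero.mp (le_antisymm this (abs_nonneg _))
    -- Step 2: |h s| ≤ 3/5 on [-2, 2]
    have h2 : ∀ s ∈ Icc (-(2:ℝ)) 2, |h s| ≤ 3/5 := by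
      intro s hs
      rcases le_or_gt |s| 1 with habs | habs
      · have : s ∈ Icc (-(1:ℝ)) 1 := abs_le.mp habs
        rw [h0 s this]
        norm_num
      · by_contra hc
        push_neg at hc
        have hcne : h s ≠ 0 := by
          intro h0'
          rw [h0'] at hc
          norm_num at hc
        set t : ℝ := gclamp s / h s with hts
        have hgabs : |gclamp s| = 1 := abs_gclamp_of_one_le_abs habs.le
        have hval : gclamp s + t * h s = 2 * gclamp s := by
          rw [hts, div_mul_cancel₀ _ hcne]; ring
        have hkey := (hbd 1 ((1:ℝ), t)).2
        rw [Yex_seminorm_one] at hkey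
        have hs' : s ∈ Icc (-(1:ℕ) - 1 : ℝ) ((1:ℕ) + 1 : ℝ) := by
          simp only [Nat.cast_one]
          constructor <;> [linarith [hs.1]; linarith [hs.2]]
        have hpt := le_supIcc 1 (f (1, t)) hs'
        have hfval : (f (1, t)) s = gclamp s + t * h s := by
          rw [hlin t]
          rfl
        rw [hfval, hval] at hpt
        have h2abs : |2 * gclamp s| = 2 := by
          rw [abs_mul, hgabs]
          norm_num
        rw [h2abs] at hpt
        -- bound on |t|
        have htabs : |t| = 1 / |h s| := by
          rw [hts, abs_div, hgabs]
        have htlt : |t| < 5/3 := by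
          rw [htabs]
          rw [div_lt_iff₀ (abs_pos.mpr hcne)]
          linarith
        have hub : (1 + 1/5) * max |(1:ℝ)| |t| < 2 := by
          have : max |(1:ℝ)| |t| < 5/3 := by
            apply max_lt _ htlt
            rw [abs_one]
            norm_num
          nlinarith
        have := le_trans hpt hkey
        linarith
    -- Step 3: contradiction from the lower bound at level 1
    have hup : supIccSeminorm 1 h ≤ 3/5 := by
      apply supIcc_le 1 h (by norm_num)
      intro x hx
      apply h2
      have h1 : -(1:ℕ) - 1 = (-(2:ℝ)) := by norm_num
      have h1' : ((1:ℕ):ℝ) + 1 = (2:ℝ) := by norm_num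
      constructor
      · have := hx.1
        simp only [Nat.cast_one] at this
        linarith
      · have := hx.2
        simp only [Nat.cast_one] at this
        linarith
    have hlo := (hbd 1 (0, 1)).1
    rw [Yex_seminorm_one] at hlo
    simp only [abs_zero, abs_one, max_eq_right zero_le_one, mul_one] at hlo
    have : (1 + 1/5 : ℝ)⁻¹ = 5/6 := by norm_num
    rw [this] at hlo
    linarith
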